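/- The greedy choice function with transferable quotas is substitutable: if a child c is chosen from a set C', then c is also chosen from any subset of C' containing c. -/

import Mathlib

/-- Greedy choice: process children in priority order (the list `order`),
    accept a child from the applicant set iff its grade group's accepted
    count is still below the group's transferable quota. -/
def greedyAux {Child ι : Type} [DecidableEq Child] [DecidableEq ι]
    (group : Child → ι) (quota : ι → ℕ) :
    List Child → Finset Child → Finset Child → Finset Child
  | [], _, acc => acc
  | c :: rest, C', acc =>
      if c ∈ C' ∧ (acc.filter (fun x => group x = group c)).card < quota (group c)
      then greedyAux group quota rest C' (insert c acc)
      else greedyAux group quota rest C' acc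

/-- The choice function `Ch_d` of a daycare with priority list `order`,
    grade-group map `group` and transferable quotas `quota`. -/
def choice {Child ι : Type} [DecidableEq Child] [DecidableEq ι]
    (group : Child → ι) (quota : ι → ℕ) (order : List Child) (C' : Finset Child) :
    Finset Child :=
  greedyAux group quota order C' ∅

private lemma filter_insert_card_aux {Child ι : Type} [DecidableEq Child] [DecidableEq ι]
    (group : Child → ι) (a : Child) (s : Finset Child) (ha : a ∉ s) (g : ι) :
    ((insert a s).filter (fun x => group x = g)).card
      = (s.filter (fun x => group x = g)).card + (if group a = g then 1 else 0) := by
  rw [Finset.filter_insert]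
  split_ifs with h
  · rw [Finset.card_insert_of_notMem (fun hmem => ha (Finset.mem_filter.mp hmem).1)]
  · rfl

private lemma greedy_mono {Child ι : Type} [DecidableEq Child] [DecidableEq ι]
    (group : Child → ι) (quota : ι → ℕ) (l : List Child) :
    ∀ (C' C'' A' A'' : Finset Child),
      C'' ⊆ C' → l.Nodup →
      (∀ x ∈ A', x ∉ l) → (∀ x ∈ A'', x ∉ l) →
      (∀ x ∈ A', x ∈ C'' → x ∈ A'') →
      (∀ g, (A''.filter (fun x => group x = g)).card
            ≤ (A'.filter (fun x => group x = g)).card) →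
      ∀ x ∈ greedyAux group quota l C' A', x ∈ C'' →
        x ∈ greedyAux group quota l C'' A'' := by
  induction l with
  | nil =>
      intro C' C'' A' A'' _ _ _ _ hmem _ x hx hxC''
      simp only [greedyAux] at hx ⊢
      exact hmem x hx hxC''
  | cons a rest ih =>
      intro C' C'' A' A'' hsub hnd hA' hA'' hmem hcard x hx hxC''
      have hndrest : rest.Nodup := (List.nodup_cons.mp hnd).2
      have hanotrest : a ∉ rest := (List.nodup_cons.mp hnd).1
      have haA' : a ∉ A' := fun h => hA' a h (List.mem_cons_self (a := a) (l := rest))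
      have haA'' : a ∉ A'' := fun h => hA'' a h (List.mem_cons_self (a := a) (l := rest))
      have hA'rest : ∀ y ∈ A', y ∉ rest :=
        fun y hy hr => hA' y hy (List.mem_cons_of_mem a hr)
      have hA''rest : ∀ y ∈ A'', y ∉ rest :=
        fun y hy hr => hA'' y hy (List.mem_cons_of_mem a hr)
      simp only [greedyAux] at hx ⊢
      by_cases h1 : a ∈ C' ∧ (A'.filter (fun x => group x = group a)).card < quota (group a)
      · rw [if_pos h1] at hx
        by_cases haC'' : a ∈ C''
        · -- accepted in both runs
          have h2 : a ∈ C'' ∧ (A''.filter (fun x => group x = group a)).card < quota (group a) :=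
            ⟨haC'', lt_of_le_of_lt (hcard (group a)) h1.2⟩
          rw [if_pos h2]
          refine ih C' C'' (insert a A') (insert a A'') hsub hndrest
            ?_ ?_ ?_ ?_ x hx hxC''
          · intro y hy
            rcases Finset.mem_insert.mp hy with rfl | hy'
            · exact hanotrest
            · exact hA'rest y hy'
          · intro y hy
            rcases Finset.mem_insert.mp hy with rfl | hy'
            · exact hanotrest
            · exact hA''rest y hy'
          · intro y hy hyC''
            rcases Finset.mem_insert.mp hy with rfl | hy'
            · exact Finset.mem_insert_self _ _
            · exact Finset.mem_insert_of_mem (hmem y hy' hyC'')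
          · intro g
            rw [filter_insert_card_aux group a A' haA' g,
                filter_insert_card_aux group a A'' haA'' g]
            exact Nat.add_le_add_right (hcard g) _
        · -- accepted only in the C' run
          have h2 : ¬ (a ∈ C'' ∧ (A''.filter (fun x => group x = group a)).card < quota (group a)) :=
            fun h => haC'' h.1
          rw [if_neg h2]
          refine ih C' C'' (insert a A') A'' hsub hndrest ?_ hA''rest ?_ ?_ x hx hxC''
          · intro y hy
            rcases Finset.mem_insert.mp hy with rfl | hy'
            · exact hanotrest
            · exact hA'rest y hy'
          · intro y hy hyC''
            rcases Finset.mem_insert.mp hy with rfl | hy'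
            · exact absurd hyC'' haC''
            · exact hmem y hy' hyC''
          · intro g
            rw [filter_insert_card_aux group a A' haA' g]
            exact le_trans (hcard g) (Nat.le_add_right _ _)
      · rw [if_neg h1] at hx
        by_cases h2 : a ∈ C'' ∧ (A''.filter (fun x => group x = group a)).card < quota (group a)
        · -- accepted only in the C'' run
          rw [if_pos h2]
          have haC' : a ∈ C' := hsub h2.1
          have hge : quota (group a) ≤ (A'.filter (fun x => group x = group a)).card := by
            by_contra hlt
            exact h1 ⟨haC', Nat.lt_of_not_le hlt⟩
          refine ih C' C'' A' (insert a A'') hsub hndrest hA'rest ?_ ?_ ?_ x hx hxC''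
          · intro y hy
            rcases Finset.mem_insert.mp hy with rfl | hy'
            · exact hanotrest
            · exact hA''rest y hy'
          · intro y hy hyC''
            exact Finset.mem_insert_of_mem (hmem y hy hyC'')
          · intro g
            rw [filter_insert_card_aux group a A'' haA'' g]
            split_ifs with hg
            · subst hg
              exact le_trans h2.2 hge
            · simpa using hcard g
        · rw [if_neg h2]
          exact ih C' C'' A' A'' hsub hndrest hA'rest hA''rest hmem hcard x hx hxC''

/-- substitutability: if a child `c` is chosen from `C'`,
    then `c` is also chosen from any subset of `C'` containing `c`. -/
theorem choice_substitutable {Child ι : Type} [DecidableEq Child] [DecidableEq ι]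
    (order : List Child) (horder : order.Nodup)
    (group : Child → ι) (quota : ι → ℕ)
    (C' C'' : Finset Child) (hC' : ∀ c ∈ C', c ∈ order)
    (c : Child) (hc : c ∈ choice group quota order C')
    (hcC'' : c ∈ C'') (hsub : C'' ⊆ C') :
    c ∈ choice group quota order C'' := by
  exact greedy_mono group quota order C' C'' ∅ ∅ hsub horder
    (by simp) (by simp) (by simp) (by simp) c hc hcC''
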